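/- Fix an odd number d* > d and shifts τ^(j) = (j/d*, …, j/d*) ∈ R^d for j = 0, …, d*−1. For any object u ⊆ [0,1)^d with side length ℓ (side length of its smallest enclosing hypercube), the shifted object u + τ^(j) fails to be contained in a quadtree cell of side length at most 2d*·ℓ for at most d indices j ∈ {0,…,d*−1}. -/

import Mathlib

/-- An axis-aligned hypercube in `ℝ^d` with lower corner `a` and side length `ℓ`. -/
def hcube (d : ℕ) (a : Fin d → ℝ) (ℓ : ℝ) : Set (Fin d → ℝ) :=
  {x | ∀ i, a i ≤ x i ∧ x i ≤ a i + ℓ}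

/-- The side length of an object: the side length of its smallest enclosing
axis-aligned hypercube. -/
noncomputable def sideLength (d : ℕ) (u : Set (Fin d → ℝ)) : ℝ :=
  sInf {ℓ : ℝ | 0 ≤ ℓ ∧ ∃ a : Fin d → ℝ, u ⊆ hcube d a ℓ}

/-- The quadtree cell `[c₁·2^{-k}, (c₁+1)·2^{-k}) × ⋯ × [c_d·2^{-k}, (c_d+1)·2^{-k})`. -/
def qtCell (d : ℕ) (k : ℤ) (c : Fin d → ℤ) : Set (Fin d → ℝ) :=
  {x | ∀ i, (c i : ℝ) * (2 : ℝ) ^ (-k) ≤ x i ∧ x i < ((c i : ℝ) + 1) * (2 : ℝ) ^ (-k)}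

/-- `γ` is a quadtree cell. -/
def IsQuadtreeCell (d : ℕ) (γ : Set (Fin d → ℝ)) : Prop :=
  ∃ (k : ℤ) (c : Fin d → ℤ), γ = qtCell d k c

/-- An object `u` is `C`-aligned if it is contained in a quadtree cell of side length
at most `C` times the side length of `u`. -/
def IsAligned (d : ℕ) (C : ℝ) (u : Set (Fin d → ℝ)) : Prop :=
  ∃ (k : ℤ) (c : Fin d → ℤ),
    (2 : ℝ) ^ (-k) ≤ C * sideLength d u ∧ u ⊆ qtCell d k c

/-- A collection `F` of objects in `ℝ^d` is `c`-fat if for every hypercube `γ` of side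
length `ℓ` there exist at most `c` points hitting all members of `F` that intersect `γ`
and have side length at least `ℓ`. -/
def CFat (d c : ℕ) (F : Set (Set (Fin d → ℝ))) : Prop :=
  ∀ (a : Fin d → ℝ) (ℓ : ℝ), 0 < ℓ →
    ∃ P : Finset (Fin d → ℝ), P.card ≤ c ∧
      ∀ u ∈ F, (u ∩ hcube d a ℓ).Nonempty → ℓ ≤ sideLength d u → ∃ p ∈ P, p ∈ u

/-- `sideLength` is invariant under translation. -/
lemma sideLength_shift (d : ℕ) (u : Set (Fin d → ℝ)) (v : Fin d → ℝ) :
    sideLength d ((fun x => x + v) '' u) = sideLength d u := by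
  unfold sideLength
  congr 1
  ext ℓ
  simp only [Set.mem_setOf_eq]
  constructor
  · rintro ⟨h0, a, ha⟩
    refine ⟨h0, a - v, fun x hx i => ?_⟩
    have h := ha ⟨x, hx, rfl⟩ i
    simp only [Pi.add_apply] at h
    simp only [Pi.sub_apply]
    constructor <;> linarith [h.1, h.2]
  · rintro ⟨h0, a, ha⟩
    refine ⟨h0, a + v, ?_⟩
    rintro y ⟨x, hx, rfl⟩ i
    have h := ha hx i
    simp only [Pi.add_apply]
    constructor <;> linarith [h.1, h.2]

/-- Quadtree shifting lemma: for odd `d* > d` and shifts `τ⁽ʲ⁾ = (j/d*, …, j/d*)`,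
for any object `u ⊆ [0,1)^d` of positive side length, the shifted object `u + τ⁽ʲ⁾`
fails to be `(2d*)`-aligned for at most `d` of the indices `j ∈ {0,…,d*−1}`. -/
theorem quadtree_shifting (d dstar : ℕ) (hodd : Odd dstar) (hd : d < dstar)
    (u : Set (Fin d → ℝ)) (hu : u ⊆ {x | ∀ i, 0 ≤ x i ∧ x i < 1})
    (hpos : 0 < sideLength d u) :
    {j : Fin dstar | ¬ IsAligned d (2 * (dstar : ℝ))
        ((fun x => x + fun _ => (j : ℝ) / (dstar : ℝ)) '' u)}.ncard ≤ d := by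
  classical
  set ℓ := sideLength d u with hℓdef
  have hdstar0 : 0 < dstar := Nat.pos_of_ne_zero (by rintro rfl; omega)
  have hD : (0:ℝ) < (dstar:ℝ) := by exact_mod_cast hdstar0
  have hD0 : (dstar:ℝ) ≠ 0 := ne_of_gt hD
  -- the defining set of sideLength
  have hBB : BddBelow {ℓ' : ℝ | 0 ≤ ℓ' ∧ ∃ a, u ⊆ hcube d a ℓ'} := ⟨0, fun x hx => hx.1⟩
  have hmem1 : (1:ℝ) ∈ {ℓ' : ℝ | 0 ≤ ℓ' ∧ ∃ a, u ⊆ hcube d a ℓ'} := by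
    refine ⟨zero_le_one, fun _ => 0, fun x hx i => ?_⟩
    have h := hu hx i
    exact ⟨h.1, by simpa using h.2.le⟩
  have hne : u.Nonempty := by
    by_contra h
    rw [Set.not_nonempty_iff_eq_empty] at h
    have : ℓ ≤ 0 := csInf_le hBB ⟨le_refl 0, fun _ => 0, by simp [h]⟩
    linarith
  have hℓ1 : ℓ ≤ 1 := csInf_le hBB hmem1
  -- lower/upper envelopes of u in each coordinate
  set b : Fin d → ℝ := fun i => sInf ((fun x => x i) '' u) with hbdef
  set C : Fin d → ℝ := fun i => sSup ((fun x => x i) '' u) with hCdef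
  have himgne : ∀ i, ((fun x : Fin d → ℝ => x i) '' u).Nonempty := fun i => hne.image _
  have himgbdd : ∀ i, BddAbove ((fun x : Fin d → ℝ => x i) '' u) := by
    intro i; refine ⟨1, ?_⟩; rintro y ⟨x, hx, rfl⟩; exact (hu hx i).2.le
  have himgbddb : ∀ i, BddBelow ((fun x : Fin d → ℝ => x i) '' u) := by
    intro i; refine ⟨0, ?_⟩; rintro y ⟨x, hx, rfl⟩; exact (hu hx i).1
  have hbx : ∀ x ∈ u, ∀ i, b i ≤ x i := fun x hx i => csInf_le (himgbddb i) ⟨x, hx, rfl⟩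
  have hxC : ∀ x ∈ u, ∀ i, x i ≤ C i := fun x hx i => le_csSup (himgbdd i) ⟨x, hx, rfl⟩
  have hb0 : ∀ i, 0 ≤ b i := by
    intro i; apply le_csInf (himgne i); rintro y ⟨x, hx, rfl⟩; exact (hu hx i).1
  have hC1 : ∀ i, C i ≤ 1 := by
    intro i; apply csSup_le (himgne i); rintro y ⟨x, hx, rfl⟩; exact (hu hx i).2.le
  have hCb : ∀ i, C i - b i ≤ ℓ := by
    intro i
    apply le_csInf ⟨1, hmem1⟩
    rintro ℓ' ⟨h0, a, ha⟩
    have h1 : C i ≤ a i + ℓ' := by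
      apply csSup_le (himgne i); rintro y ⟨x, hx, rfl⟩; exact (ha hx i).2
    have h2 : a i ≤ b i := by
      apply le_csInf (himgne i); rintro y ⟨x, hx, rfl⟩; exact (ha hx i).1
    linarith
  -- choose the scale
  obtain ⟨e, he1, he2⟩ := exists_mem_Ico_zpow
    (show (0:ℝ) < (dstar:ℝ) * ℓ from mul_pos hD hpos) (one_lt_two)
  set k : ℤ := -(e+1) with hkdef
  set s : ℝ := (2:ℝ)^(-k) with hsdef
  have hsval : s = (2:ℝ)^(e+1) := by rw [hsdef, hkdef, neg_neg]
  have hs_gt : (dstar:ℝ) * ℓ < s := by rw [hsval]; exact he2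
  have hs_le : s ≤ 2 * ((dstar:ℝ) * ℓ) := by
    rw [hsval, zpow_add₀ (two_ne_zero) e 1]
    have := he1
    nlinarith [this]
  have hspos : (0:ℝ) < s := by rw [hsval]; positivity
  have hside : ∀ j : Fin dstar,
      sideLength d ((fun x => x + fun _ => (j : ℝ) / (dstar : ℝ)) '' u) = ℓ :=
    fun j => sideLength_shift d u _
  -- shift value bounds
  have hτ0 : ∀ j : Fin dstar, 0 ≤ (j : ℝ) / (dstar:ℝ) := by
    intro j; positivity
  have hτ1 : ∀ j : Fin dstar, (j : ℝ) / (dstar:ℝ) < 1 := by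
    intro j
    rw [div_lt_one hD]
    exact_mod_cast j.isLt
  rcases lt_or_ge k 0 with hk | hk
  · -- big cells: everything is aligned in the cell [0,s)^d
    have hs2 : (2:ℝ) ≤ s := by
      have h1 : (2:ℝ)^(1:ℤ) ≤ (2:ℝ)^(-k) := zpow_le_zpow_right₀ one_le_two (by omega)
      rw [hsdef]
      calc (2:ℝ) = (2:ℝ)^(1:ℤ) := by norm_num
        _ ≤ (2:ℝ)^(-k) := h1
    have hall : ∀ j : Fin dstar, IsAligned d (2 * (dstar:ℝ))
        ((fun x => x + fun _ => (j : ℝ) / (dstar : ℝ)) '' u) := by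
      intro j
      refine ⟨k, fun _ => 0, ?_, ?_⟩
      · rw [hside j]; calc (2:ℝ)^(-k) = s := rfl
          _ ≤ 2 * ((dstar:ℝ) * ℓ) := hs_le
          _ = 2 * (dstar:ℝ) * ℓ := by ring
      · rintro y ⟨x, hx, rfl⟩ i
        simp only [Pi.add_apply, Int.cast_zero, zero_mul, zero_add, one_mul]
        constructor
        · have := (hu hx i).1; have := hτ0 j; linarith
        · have h1 := (hu hx i).2
          have h2 := hτ1 j
          calc x i + (j:ℝ)/(dstar:ℝ) < 1 + 1 := by linarith
            _ = 2 := by norm_num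
            _ ≤ s := hs2
    have hempty : {j : Fin dstar | ¬ IsAligned d (2 * (dstar : ℝ))
        ((fun x => x + fun _ => (j : ℝ) / (dstar : ℝ)) '' u)} = ∅ := by
      ext j; simp only [Set.mem_setOf_eq, Set.mem_empty_iff_false, iff_false, not_not]
      exact hall j
    rw [hempty]; simp
  · -- small cells
    set N : ℕ := 2 ^ k.toNat with hNdef
    have hNcast : ((N:ℝ)) = (2:ℝ)^(k:ℤ) := by
      rw [hNdef]
      push_cast
      rw [← zpow_natCast]
      congr 1
      omega
    have hNpos : (0:ℝ) < (N:ℝ) := by rw [hNcast]; positivity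
    have hsN : s * (N:ℝ) = 1 := by
      rw [hsdef, hNcast, ← zpow_add₀ (two_ne_zero : (2:ℝ) ≠ 0)]
      simp
    -- bad sets
    set B : Fin d → Set (Fin dstar) := fun i =>
      {j | ∃ m : ℤ, b i + (j:ℝ)/(dstar:ℝ) < (m:ℝ) * s ∧ (m:ℝ) * s ≤ C i + (j:ℝ)/(dstar:ℝ)}
      with hBdef
    -- each bad set has at most one element
    have hsingle : ∀ i : Fin d, ∀ j1 ∈ B i, ∀ j2 ∈ B i, j1 = j2 := by
      intro i j1 hj1 j2 hj2
      obtain ⟨m1, h11, h12⟩ := hj1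
      obtain ⟨m2, h21, h22⟩ := hj2
      -- scaling helper
      have step1 : ∀ (m : ℤ) (jv : ℕ), b i + (jv:ℝ)/(dstar:ℝ) < (m:ℝ) * s →
          b i * N * dstar + jv * N < (m:ℝ) * dstar := by
        intro m jv h
        have h' := mul_lt_mul_of_pos_right h (mul_pos hNpos hD)
        have e1 : (b i + (jv:ℝ)/(dstar:ℝ)) * ((N:ℝ) * dstar)
            = b i * N * dstar + jv * N := by field_simp
        have e2 : (m:ℝ) * s * ((N:ℝ) * (dstar:ℝ)) = (m:ℝ) * dstar := by
          rw [show (m:ℝ) * s * ((N:ℝ) * (dstar:ℝ)) = (m:ℝ) * (dstar:ℝ) * (s * (N:ℝ)) from by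
            ring, hsN, mul_one]
        rw [e1, e2] at h'
        exact h'
      have step2 : ∀ (m : ℤ) (jv : ℕ), (m:ℝ) * s ≤ C i + (jv:ℝ)/(dstar:ℝ) →
          (m:ℝ) * dstar ≤ C i * N * dstar + jv * N := by
        intro m jv h
        have h' := mul_le_mul_of_nonneg_right h (le_of_lt (mul_pos hNpos hD))
        have e1 : (C i + (jv:ℝ)/(dstar:ℝ)) * ((N:ℝ) * dstar)
            = C i * N * dstar + jv * N := by field_simp
        have e2 : (m:ℝ) * s * ((N:ℝ) * (dstar:ℝ)) = (m:ℝ) * dstar := by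
          rw [show (m:ℝ) * s * ((N:ℝ) * (dstar:ℝ)) = (m:ℝ) * (dstar:ℝ) * (s * (N:ℝ)) from by
            ring, hsN, mul_one]
        rw [e1, e2] at h'
        exact h'
      have hA1 := step1 m1 j1.val h11
      have hA2 := step2 m1 j1.val h12
      have hB1 := step1 m2 j2.val h21
      have hB2 := step2 m2 j2.val h22
      -- the gap is less than 1
      have hgap : C i * N * dstar - b i * N * dstar < 1 := by
        have h1 : (C i - b i) * ((N:ℝ) * dstar) ≤ ℓ * ((N:ℝ) * dstar) :=
          mul_le_mul_of_nonneg_right (hCb i) (le_of_lt (mul_pos hNpos hD))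
        have h2 : (dstar:ℝ) * ℓ * (N:ℝ) < s * (N:ℝ) :=
          mul_lt_mul_of_pos_right hs_gt hNpos
        rw [hsN] at h2
        nlinarith
      -- the two integer residues coincide
      set r1 : ℤ := m1 * dstar - (j1.val : ℤ) * N with hr1
      set r2 : ℤ := m2 * dstar - (j2.val : ℤ) * N with hr2
      have hr1c : ((r1:ℤ):ℝ) = (m1:ℝ) * dstar - (j1.val:ℝ) * N := by push_cast [hr1]; ring
      have hr2c : ((r2:ℤ):ℝ) = (m2:ℝ) * dstar - (j2.val:ℝ) * N := by push_cast [hr2]; ring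
      have hb1 : b i * N * dstar < (r1:ℝ) := by rw [hr1c]; linarith
      have hc1 : (r1:ℝ) ≤ C i * N * dstar := by rw [hr1c]; linarith
      have hb2 : b i * N * dstar < (r2:ℝ) := by rw [hr2c]; linarith
      have hc2 : (r2:ℝ) ≤ C i * N * dstar := by rw [hr2c]; linarith
      have hreq : r1 = r2 := by
        have h1 : ((r1 - r2 : ℤ):ℝ) < 1 := by push_cast; linarith
        have h2 : ((r2 - r1 : ℤ):ℝ) < 1 := by push_cast; linarith
        have h1' : r1 - r2 < 1 := by exact_mod_cast h1
        have h2' : r2 - r1 < 1 := by exact_mod_cast h2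
        omega
      -- divisibility argument
      have hdvd : (dstar:ℤ) ∣ ((j2.val:ℤ) - (j1.val:ℤ)) * (N:ℤ) := by
        refine ⟨m2 - m1, ?_⟩
        have : m1 * (dstar:ℤ) - (j1.val:ℤ) * N = m2 * dstar - (j2.val:ℤ) * N := by
          rw [← hr1, ← hr2, hreq]
        linear_combination this
      have hcop : Nat.Coprime dstar N := (hodd.coprime_two_right).pow_right _
      have hdvd2 : (dstar:ℤ) ∣ ((j2.val:ℤ) - (j1.val:ℤ)) := by
        refine Int.dvd_of_dvd_mul_left_of_gcd_one hdvd ?_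
        rw [Int.gcd_natCast_natCast]
        exact hcop
      have hzero : (j2.val:ℤ) - (j1.val:ℤ) = 0 := by
        apply Int.eq_zero_of_abs_lt_dvd hdvd2
        have h1 := j1.isLt
        have h2 := j2.isLt
        rw [abs_lt]
        constructor <;> [skip; skip] <;> omega
      have : j1.val = j2.val := by omega
      exact Fin.ext this
    -- any good shift is aligned
    have halign : ∀ j : Fin dstar, (∀ i, j ∉ B i) → IsAligned d (2 * (dstar:ℝ))
        ((fun x => x + fun _ => (j : ℝ) / (dstar : ℝ)) '' u) := by
      intro j hgood
      set t : ℝ := (j:ℝ)/(dstar:ℝ) with htdef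
      refine ⟨k, fun i => ⌊(b i + t) * N⌋, ?_, ?_⟩
      · rw [hside j]
        calc (2:ℝ)^(-k) = s := rfl
          _ ≤ 2 * ((dstar:ℝ) * ℓ) := hs_le
          _ = 2 * (dstar:ℝ) * ℓ := by ring
      · rintro y ⟨x, hx, rfl⟩ i
        simp only [Pi.add_apply]
        have hbtN : ((⌊(b i + t) * N⌋ : ℤ):ℝ) ≤ (b i + t) * N := Int.floor_le _
        have hbtN2 : (b i + t) * N < (⌊(b i + t) * N⌋ : ℝ) + 1 := Int.lt_floor_add_one _
        have hid : (b i + t) * (N:ℝ) * s = b i + t := by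
          rw [mul_assoc, mul_comm (N:ℝ) s, hsN, mul_one]
        constructor
        · -- lower bound
          have h1 : ((⌊(b i + t) * N⌋ : ℤ):ℝ) * s ≤ (b i + t) * N * s :=
            mul_le_mul_of_nonneg_right hbtN hspos.le
          rw [hid] at h1
          have := hbx x hx i
          calc ((⌊(b i + t) * N⌋ : ℤ):ℝ) * (2:ℝ)^(-k) = ((⌊(b i + t) * N⌋ : ℤ):ℝ) * s := rfl
            _ ≤ b i + t := h1
            _ ≤ x i + t := by linarith
        · -- upper bound
          have hlow : b i + t < (((⌊(b i + t) * N⌋ : ℝ)) + 1) * s := by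
            have h1 : (b i + t) * N * s < ((⌊(b i + t) * N⌋ : ℝ) + 1) * s :=
              mul_lt_mul_of_pos_right hbtN2 hspos
            rw [hid] at h1
            exact h1
          have hnotbad := hgood i
          rw [hBdef] at hnotbad
          simp only [Set.mem_setOf_eq, not_exists, not_and] at hnotbad
          have hnb := hnotbad (⌊(b i + t) * N⌋ + 1)
          have hlow' : b i + t < ((⌊(b i + t) * N⌋ + 1 : ℤ):ℝ) * s := by push_cast; exact hlow
          have hcup : ¬ (((⌊(b i + t) * N⌋ + 1 : ℤ):ℝ) * s ≤ C i + t) := hnb hlow'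
          push_neg at hcup
          have hxc := hxC x hx i
          calc x i + t ≤ C i + t := by linarith
            _ < ((⌊(b i + t) * N⌋ + 1 : ℤ):ℝ) * s := hcup
            _ = ((⌊(b i + t) * N⌋ : ℝ) + 1) * (2:ℝ)^(-k) := by push_cast; rfl
    -- counting
    set S : Set (Fin dstar) := {j : Fin dstar | ¬ IsAligned d (2 * (dstar : ℝ))
        ((fun x => x + fun _ => (j : ℝ) / (dstar : ℝ)) '' u)} with hSdef
    show S.ncard ≤ d
    have hsub : ∀ j ∈ S, ∃ i, j ∈ B i := by
      intro j hj
      by_contra h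
      push_neg at h
      exact hj (halign j h)
    rcases isEmpty_or_nonempty (Fin d) with hemp | hnemp
    · have hS : S = ∅ := by
        ext j
        simp only [Set.mem_empty_iff_false, iff_false]
        intro hj
        obtain ⟨i, _⟩ := hsub j hj
        exact hemp.false i
      rw [hS]; simp
    · set φ : Fin dstar → Fin d := fun j =>
        if h : ∃ i, j ∈ B i then h.choose else Classical.arbitrary _ with hφdef
      have hφmem : ∀ j ∈ S, j ∈ B (φ j) := by
        intro j hj
        have h := hsub j hj
        simp only [hφdef, dif_pos h]
        exact h.choose_spec
      have hcard := Set.ncard_le_ncard_of_injOn φ (fun j _ => Set.mem_univ (φ j))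
        (fun j1 h1 j2 h2 he => hsingle (φ j1) j1 (hφmem j1 h1) j2 (by
          rw [he]; exact hφmem j2 h2)) Set.finite_univ
      simpa [Set.ncard_univ] using hcard
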